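/- Let N = U ⊕ U(2) ⊕ E8(2) and define ε: N → ℤ/2 by ε(x) = (x·(e+f)) mod 2, where e, f are the standard generators of the U summand. Then ε does not depend on the choice of embedding of U into N as an orthogonal direct summand of this form; consequently α*(ε) = ε for every isometry α of N. -/
import Mathlib


/-!
We model the lattice `N = U ⊕ U(2) ⊕ E8(2)` as `ℤ¹²` with an explicit Gram matrix:
coordinates 0,1 span the hyperbolic plane `U` (basis `e, f`), coordinates 2,3 span
`U(2)` (basis `h, k`), and coordinates 4,…,11 span `E8(2)` (the negative definite
even unimodular `E8` lattice with its form doubled; the E8 Dynkin diagram used is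
the chain 4-5-6-7-8-9-10 with the extra node 11 attached to node 6).
-/

open Matrix

/-- Gram matrix of `N = U ⊕ U(2) ⊕ E8(2)`. -/
def NGram : Matrix (Fin 12) (Fin 12) ℤ :=
  !![0,1,0,0, 0,0,0,0,0,0,0,0;
     1,0,0,0, 0,0,0,0,0,0,0,0;
     0,0,0,2, 0,0,0,0,0,0,0,0;
     0,0,2,0, 0,0,0,0,0,0,0,0;
     0,0,0,0, -4,2,0,0,0,0,0,0;
     0,0,0,0, 2,-4,2,0,0,0,0,0;
     0,0,0,0, 0,2,-4,2,0,0,0,2;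
     0,0,0,0, 0,0,2,-4,2,0,0,0;
     0,0,0,0, 0,0,0,2,-4,2,0,0;
     0,0,0,0, 0,0,0,0,2,-4,2,0;
     0,0,0,0, 0,0,0,0,0,2,-4,0;
     0,0,0,0, 0,0,2,0,0,0,0,-4]

/-- The symmetric bilinear form of the lattice `N`. -/
def Nform (x y : Fin 12 → ℤ) : ℤ := x ⬝ᵥ NGram.mulVec y

/-- The standard hyperbolic vector `e` of the `U` summand of `N`. -/
def eN : Fin 12 → ℤ := Pi.single 0 1

/-- The standard hyperbolic vector `f` of the `U` summand of `N`. -/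
def fN : Fin 12 → ℤ := Pi.single 1 1

/-- The character `ε : N → ℤ/2`, `ε(x) = (x·(e+f)) mod 2`. -/
def epsN (x : Fin 12 → ℤ) : ZMod 2 := ((Nform x (eN + fN) : ℤ) : ZMod 2)

lemma vec12 (x : Fin 12 → ℤ) :
    x = ![x 0,x 1,x 2,x 3,x 4,x 5,x 6,x 7,x 8,x 9,x 10,x 11] := by
  funext i; fin_cases i <;> rfl

lemma Nform_expand (x y : Fin 12 → ℤ) : Nform x y =
    x 0 * y 1 + x 1 * y 0 +
    2 * (x 2 * y 3 + x 3 * y 2) +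
    2 * (x 4 * y 5 + x 5 * y 4 + x 5 * y 6 + x 6 * y 5 + x 6 * y 7 + x 7 * y 6 +
         x 7 * y 8 + x 8 * y 7 + x 8 * y 9 + x 9 * y 8 + x 9 * y 10 + x 10 * y 9 +
         x 6 * y 11 + x 11 * y 6) -
    4 * (x 4 * y 4 + x 5 * y 5 + x 6 * y 6 + x 7 * y 7 + x 8 * y 8 + x 9 * y 9 +
         x 10 * y 10 + x 11 * y 11) := by
  conv_lhs => rw [vec12 x, vec12 y]
  simp [Nform, NGram, mulVec, dotProduct, Fin.sum_univ_succ]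
  ring

/-- mod 2, the form only sees the U-coordinates. -/
lemma Nform_mod2 (x y : Fin 12 → ℤ) :
    ((Nform x y : ℤ) : ZMod 2) = (x 0 : ZMod 2) * (y 1 : ZMod 2) + (x 1 : ZMod 2) * (y 0 : ZMod 2) := by
  rw [Nform_expand]
  push_cast
  simp only [show (2:ZMod 2) = 0 by decide, show (4:ZMod 2) = 0 by decide,
    mul_zero, zero_mul, add_zero, zero_add, sub_zero, zero_sub, neg_zero, neg_neg]

/-- if x is isotropic then x₀x₁ is even. -/
lemma isotropic_mod2 (x : Fin 12 → ℤ) (h : Nform x x = 0) :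
    (x 0 : ZMod 2) * (x 1 : ZMod 2) = 0 := by
  have he := Nform_expand x x
  rw [h] at he
  set Q : ℤ := x 2 * x 3 + (x 4 * x 5 + x 5 * x 6 + x 6 * x 7 + x 7 * x 8 +
      x 8 * x 9 + x 9 * x 10 + x 6 * x 11) - (x 4 * x 4 + x 5 * x 5 + x 6 * x 6 +
      x 7 * x 7 + x 8 * x 8 + x 9 * x 9 + x 10 * x 10 + x 11 * x 11) with hQ
  have h1 : (2:ℤ) * (x 0 * x 1) = 2 * (-2 * Q) := by rw [hQ]; linear_combination -he
  have h2 : x 0 * x 1 = -2 * Q := mul_left_cancel₀ two_ne_zero h1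
  calc ((x 0 : ZMod 2)) * (x 1 : ZMod 2) = ((x 0 * x 1 : ℤ) : ZMod 2) := by push_cast; ring
    _ = 0 := by rw [h2]; push_cast
                simp only [show (2:ZMod 2) = 0 by decide, neg_zero, zero_mul, mul_zero]

lemma zmod2_key (a b c d : ZMod 2) (h1 : a * b = 0) (h2 : c * d = 0)
    (h3 : a * d + b * c = 1) : a + c = 1 ∧ b + d = 1 := by
  revert h1 h2 h3; revert a b c d; decide

lemma eps_eq (x : Fin 12 → ℤ) : epsN x = (x 0 : ZMod 2) + (x 1 : ZMod 2) := by
  rw [epsN, Nform_mod2]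
  simp [eN, fN, Pi.single_apply]

/-- The character `ε(x) = (x·(e+f)) mod 2` on `N = U ⊕ U(2) ⊕ E8(2)`
does not depend on the choice of hyperbolic pair: for any `e', f' ∈ N` with
`(e'²) = (f'²) = 0` and `(e'·f') = 1`, the functional `x ↦ (x·(e'+f')) mod 2` equals `ε`.
Consequently `α*(ε) = ε` for every isometry `α` of `N`. -/
theorem stmt_1 :
    (∀ e' f' : Fin 12 → ℤ, Nform e' e' = 0 → Nform f' f' = 0 → Nform e' f' = 1 →
      ∀ x : Fin 12 → ℤ, ((Nform x (e' + f') : ℤ) : ZMod 2) = epsN x) ∧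
    (∀ α : (Fin 12 → ℤ) ≃ₗ[ℤ] (Fin 12 → ℤ),
      (∀ x y : Fin 12 → ℤ, Nform (α x) (α y) = Nform x y) →
      ∀ x : Fin 12 → ℤ, epsN (α x) = epsN x) := by
  have part1 : ∀ e' f' : Fin 12 → ℤ, Nform e' e' = 0 → Nform f' f' = 0 → Nform e' f' = 1 →
      ∀ x : Fin 12 → ℤ, ((Nform x (e' + f') : ℤ) : ZMod 2) = epsN x := by
    intro e' f' he hf hef x
    have h1 := isotropic_mod2 e' he
    have h2 := isotropic_mod2 f' hf
    have h3 : (e' 0 : ZMod 2) * (f' 1 : ZMod 2) + (e' 1 : ZMod 2) * (f' 0 : ZMod 2) = 1 := by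
      have := Nform_mod2 e' f'
      rw [hef] at this
      simpa using this.symm
    obtain ⟨ha, hb⟩ := zmod2_key _ _ _ _ h1 h2 h3
    rw [Nform_mod2, eps_eq]
    have hA : ((e' + f') 0 : ZMod 2) = (e' 0 : ZMod 2) + (f' 0 : ZMod 2) := by
      simp [Pi.add_apply]
    have hB : ((e' + f') 1 : ZMod 2) = (e' 1 : ZMod 2) + (f' 1 : ZMod 2) := by
      simp [Pi.add_apply]
    rw [hA, hB, hb, ha]
    ring
  refine ⟨part1, ?_⟩
  intro α hα x
  have hsym : ∀ u v, Nform (α.symm u) (α.symm v) = Nform u v := by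
    intro u v
    conv_rhs => rw [← α.apply_symm_apply u, ← α.apply_symm_apply v]
    rw [hα]
  have hee : Nform eN eN = 0 := by rw [Nform_expand]; simp [eN, Pi.single_apply]
  have hff : Nform fN fN = 0 := by rw [Nform_expand]; simp [fN, Pi.single_apply]
  have hef : Nform eN fN = 1 := by rw [Nform_expand]; simp [eN, fN, Pi.single_apply]
  have h1 : Nform (α.symm eN) (α.symm eN) = 0 := by rw [hsym]; exact hee
  have h2 : Nform (α.symm fN) (α.symm fN) = 0 := by rw [hsym]; exact hff
  have h3 : Nform (α.symm eN) (α.symm fN) = 1 := by rw [hsym]; exact hef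
  have key := part1 _ _ h1 h2 h3 x
  rw [← key, epsN]
  congr 1
  have : eN + fN = α (α.symm eN + α.symm fN) := by
    rw [map_add, α.apply_symm_apply, α.apply_symm_apply]
  rw [this, hα]
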